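/- Let I ⊆ ℝ be an open interval, p : I → Matₙ(ℝ) continuous with p(u) symmetric for all u, u₀ ∈ I, and let S : I → Matₙ(ℝ) be a differentiable function with S(u) symmetric for all u ∈ I, satisfying the Sachs equation S'(u) + S(u)² + p(u) = 0 on I. Then there exists a twice differentiable function L : I → Matₙ(ℝ) with L(u₀) = 1 (the identity matrix), L'(u) = S(u)·L(u) on I, such that L(u) is invertible for every u ∈ I, L satisfies the Jacobi equation L''(u) + p(u)·L(u) = 0 on I, and L satisfies the isotropy condition L(u)ᵀ·L'(u) = L'(u)ᵀ·L(u) for all u ∈ I. -/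

import Mathlib

open Matrix Set

attribute [local instance] Matrix.frobeniusNormedAddCommGroup Matrix.frobeniusNormedSpace

open intervalIntegral MeasureTheory
open scoped Interval

attribute [local instance] Matrix.frobeniusNormedRing Matrix.frobeniusNormedAlgebra

namespace SachsAux

variable {n : ℕ}

noncomputable def picard (S : ℝ → Matrix (Fin n) (Fin n) ℝ) (u₀ : ℝ) :
    ℕ → ℝ → Matrix (Fin n) (Fin n) ℝ
  | 0 => fun _ => 1
  | (k+1) => fun u => ∫ t in u₀..u, S t * picard S u₀ k t

theorem deriv_primitive {a b u₀ : ℝ} (hu₀ : u₀ ∈ Ioo a b)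
    (f : ℝ → Matrix (Fin n) (Fin n) ℝ) (hf : ContinuousOn f (Ioo a b))
    {u : ℝ} (hu : u ∈ Ioo a b) :
    HasDerivAt (fun w => ∫ t in u₀..w, f t) (f u) u := by
  refine intervalIntegral.integral_hasDerivAt_right
    ((hf.mono ((ordConnected_Ioo).uIcc_subset hu₀ hu)).intervalIntegrable)
    (by haveI : TopologicalSpace.PseudoMetrizableSpace (Matrix (Fin n) (Fin n) ℝ) := inferInstanceAs (TopologicalSpace.PseudoMetrizableSpace (Fin n → Fin n → ℝ)); exact hf.stronglyMeasurableAtFilter isOpen_Ioo u hu)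
    (hf.continuousAt (Ioo_mem_nhds hu.1 hu.2))

theorem picard_cont {a b u₀ : ℝ} (hu₀ : u₀ ∈ Ioo a b)
    (S : ℝ → Matrix (Fin n) (Fin n) ℝ) (hS : ContinuousOn S (Ioo a b)) :
    ∀ k, ContinuousOn (picard S u₀ k) (Ioo a b) := by
  intro k
  induction k with
  | zero => exact continuousOn_const
  | succ k ih =>
    intro u hu
    exact ((deriv_primitive hu₀ _ (hS.mul ih) hu).continuousAt).continuousWithinAt

theorem picard_deriv {a b u₀ : ℝ} (hu₀ : u₀ ∈ Ioo a b)
    (S : ℝ → Matrix (Fin n) (Fin n) ℝ) (hS : ContinuousOn S (Ioo a b))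
    (k : ℕ) {u : ℝ} (hu : u ∈ Ioo a b) :
    HasDerivAt (picard S u₀ (k+1)) (S u * picard S u₀ k u) u :=
  deriv_primitive hu₀ _ (hS.mul (picard_cont hu₀ S hS k)) hu

theorem picard_bound {a b u₀ c d K : ℝ} (hu₀ : u₀ ∈ Ioo a b)
    (S : ℝ → Matrix (Fin n) (Fin n) ℝ) (hS : ContinuousOn S (Ioo a b))
    (hsub : Icc c d ⊆ Ioo a b) (hu₀' : u₀ ∈ Icc c d)
    (hK : ∀ t ∈ Icc c d, ‖S t‖ ≤ K) (k : ℕ) :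
    ∀ u ∈ Icc c d, ‖picard S u₀ k u‖ ≤
      ‖(1 : Matrix (Fin n) (Fin n) ℝ)‖ * K ^ k * |u - u₀| ^ k / (k.factorial : ℝ) := by
  have hK0 : 0 ≤ K := (norm_nonneg _).trans (hK u₀ hu₀')
  induction k with
  | zero => intro u hu; simp [picard]
  | succ k ih =>
    intro u hu
    have huIcc : uIcc u₀ u ⊆ Icc c d := (ordConnected_Icc).uIcc_subset hu₀' hu
    have hfc : ContinuousOn (fun t => S t * picard S u₀ k t) (uIcc u₀ u) :=
      (hS.mul (picard_cont hu₀ S hS k)).mono (huIcc.trans hsub)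
    have hmeas : MeasurableSet (Ι u₀ u) := measurableSet_uIoc
    have hsub' : Ι u₀ u ⊆ Icc c d := Ioc_subset_Icc_self.trans (by rw [uIcc] at huIcc; exact huIcc)
    set C : ℝ := ‖(1 : Matrix (Fin n) (Fin n) ℝ)‖ * K ^ (k+1) / (k.factorial : ℝ) with hC
    have hC0 : 0 ≤ C := by positivity
    have h1 : ‖picard S u₀ (k+1) u‖ ≤ ∫ t in Ι u₀ u, ‖S t * picard S u₀ k t‖ :=
      intervalIntegral.norm_integral_le_integral_norm_uIoc
    have h2 : ∫ t in Ι u₀ u, ‖S t * picard S u₀ k t‖ ≤ ∫ t in Ι u₀ u, C * |t - u₀| ^ k := by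
      refine setIntegral_mono_on ?_ ?_ hmeas ?_
      · exact (hfc.norm.integrableOn_compact isCompact_uIcc).mono_set Ioc_subset_Icc_self
      · exact ((continuous_const.mul ((continuous_abs.comp (continuous_id.sub continuous_const)).pow k)).continuousOn.integrableOn_compact isCompact_uIcc).mono_set Ioc_subset_Icc_self
      · intro t ht
        have htm : t ∈ Icc c d := hsub' ht
        calc ‖S t * picard S u₀ k t‖ ≤ ‖S t‖ * ‖picard S u₀ k t‖ := norm_mul_le _ _
          _ ≤ K * (‖(1 : Matrix (Fin n) (Fin n) ℝ)‖ * K ^ k * |t - u₀| ^ k / (k.factorial : ℝ)) :=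
              mul_le_mul (hK t htm) (ih t htm) (norm_nonneg _) hK0
          _ = C * |t - u₀| ^ k := by rw [hC]; ring
    have h3 : ∫ t in Ι u₀ u, C * |t - u₀| ^ k = C * (|u - u₀| ^ (k+1) / (k+1)) := by
      rw [MeasureTheory.integral_const_mul, integral_pow_abs_sub_uIoc]
    refine (h1.trans (h2.trans_eq h3)).trans_eq ?_
    rw [hC, Nat.factorial_succ]
    have hkf : (k.factorial : ℝ) ≠ 0 := Nat.cast_ne_zero.2 k.factorial_ne_zero
    have hk1 : ((k : ℝ) + 1) ≠ 0 := by positivity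
    push_cast
    field_simp


theorem exists_solution {a b u₀ : ℝ} (hu₀ : u₀ ∈ Ioo a b)
    (S : ℝ → Matrix (Fin n) (Fin n) ℝ) (hS : ContinuousOn S (Ioo a b)) :
    ∃ L : ℝ → Matrix (Fin n) (Fin n) ℝ,
      L u₀ = 1 ∧ ∀ u ∈ Ioo a b, HasDerivAt L (S u * L u) u := by
  refine ⟨fun u => ∑' k, picard S u₀ k u, ?_, ?_⟩
  · have h0 : ∀ k, k ≠ 0 → picard S u₀ k u₀ = 0 := by
      intro k hk
      cases k with
      | zero => exact absurd rfl hk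
      | succ k => simp [picard, intervalIntegral.integral_same]
    show (∑' (k : ℕ), picard S u₀ k u₀) = 1
    rw [tsum_eq_single 0 h0]
    rfl
  · intro u₁ hu₁
    have ham : a < min u₀ u₁ := lt_min hu₀.1 hu₁.1
    have hMb : max u₀ u₁ < b := max_lt hu₀.2 hu₁.2
    set c : ℝ := (a + min u₀ u₁) / 2 with hc
    set d : ℝ := (max u₀ u₁ + b) / 2 with hd
    have hac : a < c := by rw [hc]; linarith
    have hcm : c < min u₀ u₁ := by rw [hc]; linarith
    have hMd : max u₀ u₁ < d := by rw [hd]; linarith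
    have hdb : d < b := by rw [hd]; linarith
    have hsub : Icc c d ⊆ Ioo a b := fun x hx => ⟨hac.trans_le hx.1, hx.2.trans_lt hdb⟩
    have hu₀' : u₀ ∈ Ioo c d :=
      ⟨hcm.trans_le (min_le_left _ _), (le_max_left u₀ u₁).trans_lt hMd⟩
    have hu₁' : u₁ ∈ Ioo c d :=
      ⟨hcm.trans_le (min_le_right _ _), (le_max_right u₀ u₁).trans_lt hMd⟩
    obtain ⟨K, hK⟩ := (isCompact_Icc (a := c) (b := d)).exists_bound_of_continuousOn (hS.mono hsub)
    have hK0 : 0 ≤ K := (norm_nonneg _).trans (hK u₀ (Ioo_subset_Icc_self hu₀'))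
    set R : ℝ := d - c with hR
    have hR0 : 0 ≤ R := by
      rw [hR]; have := hcm.trans_le ((min_le_left u₀ u₁).trans ((le_max_left u₀ u₁).trans hMd.le))
      linarith
    have hbd := picard_bound hu₀ S hS hsub (Ioo_subset_Icc_self hu₀') hK
    set N1 : ℝ := ‖(1 : Matrix (Fin n) (Fin n) ℝ)‖ with hN1
    have hN10 : 0 ≤ N1 := norm_nonneg _
    have bound_aux : ∀ (j : ℕ), ∀ y ∈ Icc c d,
        ‖picard S u₀ j y‖ ≤ N1 * ((K * R) ^ j / (j.factorial : ℝ)) := by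
      intro j y hy
      refine (hbd j y hy).trans ?_
      have habs : |y - u₀| ≤ R := by
        rw [abs_sub_le_iff, hR]
        have h1 := hy.1; have h2 := hy.2
        have h3 := (Ioo_subset_Icc_self hu₀').1; have h4 := (Ioo_subset_Icc_self hu₀').2
        constructor <;> linarith
      rw [mul_pow]
      calc N1 * K ^ j * |y - u₀| ^ j / (j.factorial : ℝ)
          ≤ N1 * K ^ j * R ^ j / (j.factorial : ℝ) := by
            gcongr
        _ = N1 * (K ^ j * R ^ j / (j.factorial : ℝ)) := by ring
    set g' : ℕ → ℝ → Matrix (Fin n) (Fin n) ℝ :=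
      fun k => Nat.casesOn k (fun _ => 0) (fun j y => S y * picard S u₀ j y) with hg'def
    set v : ℕ → ℝ :=
      fun k => Nat.casesOn k 0 (fun j => K * (N1 * ((K * R) ^ j / (j.factorial : ℝ)))) with hvdef
    have hv : Summable v := by
      rw [← summable_nat_add_iff 1]
      exact ((Real.summable_pow_div_factorial (K * R)).mul_left N1).mul_left K
    have hg' : ∀ (k : ℕ), ∀ y ∈ Ioo c d, ‖g' k y‖ ≤ v k := by
      intro k y hy
      cases k with
      | zero => simp [hg'def, hvdef]
      | succ j =>
        calc ‖S y * picard S u₀ j y‖ ≤ ‖S y‖ * ‖picard S u₀ j y‖ := norm_mul_le _ _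
          _ ≤ K * (N1 * ((K * R) ^ j / (j.factorial : ℝ))) :=
              mul_le_mul (hK y (Ioo_subset_Icc_self hy))
                (bound_aux j y (Ioo_subset_Icc_self hy)) (norm_nonneg _) hK0
    have hg : ∀ (k : ℕ), ∀ y ∈ Ioo c d, HasDerivAt (picard S u₀ k) (g' k y) y := by
      intro k y hy
      cases k with
      | zero => exact hasDerivAt_const _ _
      | succ j => exact picard_deriv hu₀ S hS j (hsub (Ioo_subset_Icc_self hy))
    have hg0 : Summable fun k => picard S u₀ k u₀ := by
      apply summable_of_ne_finset_zero (s := {0})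
      intro k hk
      simp only [Finset.mem_singleton] at hk
      cases k with
      | zero => exact absurd rfl hk
      | succ k => simp [picard, intervalIntegral.integral_same]
    have HD := hasDerivAt_tsum_of_isPreconnected hv isOpen_Ioo (isPreconnected_Ioo)
      hg hg' hu₀' hg0 hu₁'
    have hsum1 : Summable fun k => g' k u₁ :=
      Summable.of_norm_bounded hv (fun k => hg' k u₁ hu₁')
    have hsum2 : Summable fun k => picard S u₀ k u₁ := by
      refine Summable.of_norm_bounded
        ((Real.summable_pow_div_factorial (K * R)).mul_left N1) ?_
      intro j
      exact bound_aux j u₁ (Ioo_subset_Icc_self hu₁')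
    have heq : ∑' k, g' k u₁ = S u₁ * ∑' k, picard S u₀ k u₁ := by
      rw [Summable.tsum_eq_zero_add hsum1]
      have h0 : g' 0 u₁ = 0 := rfl
      rw [h0, zero_add]
      have : (fun k => g' (k + 1) u₁) = fun k => S u₁ * picard S u₀ k u₁ := rfl
      rw [this, hsum2.tsum_mul_left (S u₁)]
    erw [heq] at HD
    exact HD

end SachsAux

open SachsAux


/-- Given a symmetric differentiable solution `S` of the Sachs equation
`S' + S² + p = 0` on the open interval `(a,b)` (with `p` continuous and symmetric) and
`u₀ ∈ (a,b)`, there exists a twice differentiable `L` with `L u₀ = 1`, `L' = S L`, `L u`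
invertible for every `u`, satisfying the Jacobi equation `L'' + p L = 0` and the isotropy
condition `Lᵀ L' = L'ᵀ L` on `(a,b)`. -/
theorem sachs_to_lagrangian_matrix {n : ℕ} (a b u₀ : ℝ) (hu₀ : u₀ ∈ Set.Ioo a b)
    (p S : ℝ → Matrix (Fin n) (Fin n) ℝ)
    (hp : ContinuousOn p (Set.Ioo a b))
    (hpsym : ∀ u ∈ Set.Ioo a b, (p u)ᵀ = p u)
    (hSsym : ∀ u ∈ Set.Ioo a b, (S u)ᵀ = S u)
    (hSachs : ∀ u ∈ Set.Ioo a b, HasDerivAt S (-(S u * S u + p u)) u) :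
    ∃ L : ℝ → Matrix (Fin n) (Fin n) ℝ,
      L u₀ = 1 ∧
      (∀ u ∈ Set.Ioo a b, HasDerivAt L (S u * L u) u) ∧
      (∀ u ∈ Set.Ioo a b, IsUnit (L u)) ∧
      (∀ u ∈ Set.Ioo a b, HasDerivAt (fun w => S w * L w) (-(p u * L u)) u) ∧
      (∀ u ∈ Set.Ioo a b, (L u)ᵀ * (S u * L u) = (S u * L u)ᵀ * L u) := by
  have hScont : ContinuousOn S (Set.Ioo a b) := fun u hu =>
    ((hSachs u hu).continuousAt).continuousWithinAt
  obtain ⟨L, hL0, hL⟩ := exists_solution hu₀ S hScont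
  obtain ⟨P, hP0, hP⟩ := exists_solution hu₀ (fun w => -(S w)) hScont.neg
  let e : Matrix (Fin n) (Fin n) ℝ →L[ℝ] Matrix (Fin n) (Fin n) ℝ :=
    LinearMap.toContinuousLinearMap
      ((Matrix.transposeLinearEquiv (Fin n) (Fin n) ℝ ℝ).toLinearMap)
  have he : ∀ X : Matrix (Fin n) (Fin n) ℝ, e X = Xᵀ := fun X => rfl
  have hQ : ∀ u ∈ Set.Ioo a b, HasDerivAt (fun w => (P w)ᵀ) ((-(S u) * P u)ᵀ) u := by
    intro u hu
    have h := (e.hasFDerivAt (x := P u)).comp_hasDerivAt u (hP u hu)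
    exact h
  have hG : ∀ u ∈ Set.Ioo a b, HasDerivAt (fun w => (P w)ᵀ * L w) 0 u := by
    intro u hu
    have h := (hQ u hu).mul (hL u hu)
    have heq : (-(S u) * P u)ᵀ * L u + (P u)ᵀ * (S u * L u) = 0 := by
      rw [Matrix.transpose_mul, Matrix.transpose_neg, hSsym u hu]
      noncomm_ring
    rwa [heq] at h
  have hGconst : ∀ u ∈ Set.Ioo a b, (P u)ᵀ * L u = 1 := by
    intro u hu
    have key : ‖(P u)ᵀ * L u - (P u₀)ᵀ * L u₀‖ ≤ 0 * ‖u - u₀‖ :=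
      Convex.norm_image_sub_le_of_norm_hasDerivWithin_le
        (f := fun w => (P w)ᵀ * L w) (f' := fun _ => 0)
        (fun x hx => (hG x hx).hasDerivWithinAt) (fun x _ => by simp)
        (convex_Ioo a b) hu₀ hu
    rw [zero_mul] at key
    have : (P u)ᵀ * L u = (P u₀)ᵀ * L u₀ := by
      have := norm_le_zero_iff.mp key
      exact sub_eq_zero.mp this
    rw [this, hP0, hL0, Matrix.transpose_one, one_mul]
  refine ⟨L, hL0, hL, ?_, ?_, ?_⟩
  · intro u hu
    have h1 := hGconst u hu
    have h2 : L u * (P u)ᵀ = 1 := mul_eq_one_comm.mpr h1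
    exact ⟨⟨L u, (P u)ᵀ, h2, h1⟩, rfl⟩
  · intro u hu
    have h := (hSachs u hu).mul (hL u hu)
    have heq : -(S u * S u + p u) * L u + S u * (S u * L u) = -(p u * L u) := by
      noncomm_ring
    rwa [heq] at h
  · intro u hu
    rw [Matrix.transpose_mul, hSsym u hu, Matrix.mul_assoc]
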